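/- Let A ⊆ [0,1] with 1 ∈ A, and assume A has no positive accumulation points in ℝ. Then for every d ≥ 1, the set of accumulation points of {⟨x,a⟩ : (x,a) ∈ Ṽ_d(A)} equals {0} ∪ ∪_{1 ≤ d' ≤ d−1} {⟨x,a⟩ : (x,a) ∈ Ṽ_{d'}(A)} (for d = 1 this set is {0}). -/

import Mathlib

open Finset in
/-- `Vtilde d A` is the set of pairs `(x,a) ∈ (0,1]^d × A^d` such that
`∑ i, (1 + (m-1) x_i - ⌈m x_i⌉) a_i ≥ 0` for every integer `m`. -/
def Vtilde (d : ℕ) (A : Set ℝ) : Set ((Fin d → ℝ) × (Fin d → ℝ)) :=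
  {p | (∀ i, p.1 i ∈ Set.Ioc (0:ℝ) 1) ∧ (∀ i, p.2 i ∈ A) ∧
    ∀ m : ℤ, 0 ≤ ∑ i, (1 + ((m:ℝ) - 1) * p.1 i - (⌈(m:ℝ) * p.1 i⌉ : ℝ)) * p.2 i}

/-- The set of accumulation points of a set `S` of reals: points `r` such that
every neighborhood of `r` contains a point of `S` different from `r`. -/
def accPts (S : Set ℝ) : Set ℝ := {r | ∀ U ∈ nhds r, ∃ s ∈ S, s ≠ r ∧ s ∈ U}

open Finset Filter

noncomputable def tphi (θ : ℝ) : ℝ := 1 + θ - ⌈θ⌉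


lemma tphi_pos (θ : ℝ) : 0 < tphi θ := by
  have h := Int.ceil_lt_add_one θ
  unfold tphi; linarith

lemma tphi_le_one (θ : ℝ) : tphi θ ≤ 1 := by
  have h := Int.le_ceil θ; unfold tphi; linarith

lemma tphi_add_int (θ : ℝ) (k : ℤ) : tphi (θ + k) = tphi θ := by
  unfold tphi; rw [Int.ceil_add_intCast]; push_cast; ring

lemma tphi_le_self {θ : ℝ} (h : 0 < θ) : tphi θ ≤ θ := by
  have h1 : (1:ℤ) ≤ ⌈θ⌉ := Int.ceil_pos.mpr h
  have h2 : (1:ℝ) ≤ (⌈θ⌉:ℝ) := by exact_mod_cast h1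
  unfold tphi; linarith

lemma tphi_of_Ioc {θ : ℝ} (h0 : 0 < θ) (h1 : θ ≤ 1) : tphi θ = θ := by
  have hc : ⌈θ⌉ = 1 := by
    have h1' : (1:ℤ) ≤ ⌈θ⌉ := Int.ceil_pos.mpr h0
    have h2' : ⌈θ⌉ ≤ 1 := Int.ceil_le.mpr (by exact_mod_cast h1)
    omega
  unfold tphi; rw [hc]; push_cast; ring

lemma tphi_self_imp {θ : ℝ} (h0 : 0 < θ) (he : tphi θ = θ) : θ ≤ 1 := by
  unfold tphi at he
  have hc : (⌈θ⌉ : ℝ) = 1 := by linarith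
  have hle := Int.le_ceil θ
  linarith

lemma tphi_usc (θ ε : ℝ) (hε : 0 < ε) :
    ∃ δ > 0, ∀ (θ' : ℝ) (k : ℤ), |θ' - θ - k| < δ → tphi θ' ≤ tphi θ + ε := by
  by_cases hint : ((⌈θ⌉ : ℝ) = θ)
  · refine ⟨1, one_pos, fun θ' k _ => ?_⟩
    have h1 : tphi θ = 1 := by unfold tphi; rw [hint]; ring
    have := tphi_le_one θ'
    linarith
  · have hlt : θ < ⌈θ⌉ := lt_of_le_of_ne (Int.le_ceil θ) (fun h => hint h.symm)
    have hgt : (⌈θ⌉:ℝ) - 1 < θ := by have := Int.ceil_lt_add_one θ; linarith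
    refine ⟨min ε (min ((⌈θ⌉:ℝ) - θ) (θ - ((⌈θ⌉:ℝ) - 1))),
      lt_min hε (lt_min (by linarith) (by linarith)), fun θ' k h => ?_⟩
    set δ := min ε (min ((⌈θ⌉:ℝ) - θ) (θ - ((⌈θ⌉:ℝ) - 1))) with hδ
    have hδε : δ ≤ ε := min_le_left _ _
    have hδ1 : δ ≤ (⌈θ⌉:ℝ) - θ := le_trans (min_le_right _ _) (min_le_left _ _)
    have hδ2 : δ ≤ θ - ((⌈θ⌉:ℝ) - 1) := le_trans (min_le_right _ _) (min_le_right _ _)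
    have habs := abs_lt.mp h
    have hceil : ⌈θ' - (k:ℝ)⌉ = ⌈θ⌉ := by
      apply Int.ceil_eq_iff.mpr
      constructor
      · push_cast; linarith [habs.1]
      · push_cast; linarith [habs.2]
    have h2 : tphi (θ' - (k:ℝ) + (k:ℝ)) = tphi (θ' - (k:ℝ)) := tphi_add_int _ k
    rw [show θ' - (k:ℝ) + (k:ℝ) = θ' by ring] at h2
    rw [h2]
    unfold tphi
    rw [hceil]
    linarith [habs.2]



lemma vtilde_iff (d : ℕ) (A : Set ℝ) (p : (Fin d → ℝ) × (Fin d → ℝ)) :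
    p ∈ Vtilde d A ↔ (∀ i, p.1 i ∈ Set.Ioc (0:ℝ) 1) ∧ (∀ i, p.2 i ∈ A) ∧
      ∀ m : ℤ, ∑ i, p.1 i * p.2 i ≤ ∑ i, tphi ((m:ℝ) * p.1 i) * p.2 i := by
  have key : ∀ m : ℤ, ∑ i, (1 + ((m:ℝ) - 1) * p.1 i - (⌈(m:ℝ) * p.1 i⌉ : ℝ)) * p.2 i
      = ∑ i, tphi ((m:ℝ) * p.1 i) * p.2 i - ∑ i, p.1 i * p.2 i := by
    intro m
    rw [← Finset.sum_sub_distrib]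
    exact Finset.sum_congr rfl (fun i _ => by unfold tphi; ring)
  constructor <;> rintro ⟨h1, h2, h3⟩ <;> refine ⟨h1, h2, fun m => ?_⟩ <;> have h3m := h3 m
  · rw [key m] at h3m; linarith
  · rw [key m]; linarith

lemma witness_of_finset {d : ℕ} (A : Set ℝ) (J : Finset (Fin d))
    (y b : Fin d → ℝ)
    (hy : ∀ j ∈ J, y j ∈ Set.Ioc (0:ℝ) 1) (hb : ∀ j ∈ J, b j ∈ A)
    (hcon : ∀ m : ℤ, ∑ j ∈ J, y j * b j ≤ ∑ j ∈ J, tphi ((m:ℝ) * y j) * b j) :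
    ∃ p ∈ Vtilde J.card A, ∑ i, p.1 i * p.2 i = ∑ j ∈ J, y j * b j := by
  classical
  let e : {j // j ∈ J} ≃ Fin J.card := J.equivFin
  have hsum : ∀ f : Fin d → ℝ, ∑ i, f ((e.symm i) : Fin d) = ∑ j ∈ J, f j := by
    intro f
    rw [Equiv.sum_comp e.symm (fun j : {j // j ∈ J} => f j)]
    exact Finset.sum_coe_sort J f
  refine ⟨(fun i => y (e.symm i), fun i => b (e.symm i)), ?_, ?_⟩
  · rw [vtilde_iff]
    refine ⟨fun i => hy _ (e.symm i).2, fun i => hb _ (e.symm i).2, fun m => ?_⟩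
    have h1 := hsum (fun j => y j * b j)
    have h2 := hsum (fun j => tphi ((m:ℝ) * y j) * b j)
    simp only at h1 h2 ⊢
    rw [h1, h2]
    exact hcon m
  · exact hsum (fun j => y j * b j)


lemma synd {d : ℕ} (x : Fin d → ℝ) {δ : ℝ} (hδ : 0 < δ) :
    ∃ G : ℝ, 0 ≤ G ∧ ∀ T : ℝ, ∃ N : ℤ,
      |(N:ℝ) - T| ≤ G ∧ ∀ i, ∃ k : ℤ, |(N:ℝ) * x i - k| < δ := by
  classical
  set F : ℤ → (Fin d → ℝ) := fun N i => (N:ℝ) * x i - ⌊(N:ℝ) * x i⌋ with hF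
  set Y := closure (Set.range F) with hY
  have hYc : IsCompact Y := by
    have h1 : IsCompact (Set.pi Set.univ (fun _ : Fin d => Set.Icc (0:ℝ) 1)) :=
      isCompact_univ_pi (fun _ => isCompact_Icc)
    apply h1.of_isClosed_subset isClosed_closure
    apply closure_minimal _ (isClosed_set_pi (fun i _ => isClosed_Icc))
    rintro _ ⟨N, rfl⟩ i _
    have h2 := Int.floor_le ((N:ℝ) * x i)
    have h3 := Int.lt_floor_add_one ((N:ℝ) * x i)
    simp only [hF, Set.mem_Icc]
    constructor <;> linarith
  set U : ℤ → Set (Fin d → ℝ) := fun N => ⋂ i, {y | ∃ k : ℤ, |y i - F N i - k| < δ/2} with hU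
  have hUopen : ∀ N, IsOpen (U N) := by
    intro N
    apply isOpen_iInter_of_finite
    intro i
    have : {y : Fin d → ℝ | ∃ k : ℤ, |y i - F N i - k| < δ/2}
        = (fun y : Fin d → ℝ => y i) ⁻¹' (⋃ k : ℤ, Metric.ball (F N i + k) (δ/2)) := by
      ext y
      simp only [Set.mem_setOf_eq, Set.mem_preimage, Set.mem_iUnion, Metric.mem_ball,
        Real.dist_eq]
      constructor <;> rintro ⟨k, hk⟩ <;> exact ⟨k, by convert hk using 2; ring⟩
    rw [this]
    exact (isOpen_iUnion (fun k => Metric.isOpen_ball)).preimage (continuous_apply i)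
  have hcover : Y ⊆ ⋃ N : ℤ, U N := by
    intro y hy
    rw [Metric.mem_closure_iff] at hy
    obtain ⟨b, ⟨M, rfl⟩, hb⟩ := hy (δ/2) (by linarith)
    refine Set.mem_iUnion.mpr ⟨M, Set.mem_iInter.mpr (fun i => ⟨0, ?_⟩)⟩
    push_cast
    have := dist_le_pi_dist y (F M) i
    rw [Real.dist_eq] at this
    calc |y i - F M i - 0| = |y i - F M i| := by ring_nf
    _ ≤ dist y (F M) := this
    _ < δ/2 := hb
  obtain ⟨t, ht⟩ := hYc.elim_finite_subcover U hUopen hcover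
  refine ⟨((t.sup (fun N => N.natAbs) : ℕ) : ℝ) + 1, by positivity, fun T => ?_⟩
  have hFM : F ⌊T⌋ ∈ Y := subset_closure (Set.mem_range_self _)
  obtain ⟨N₀, hN₀t, hN₀⟩ := Set.mem_iUnion₂.mp (ht hFM)
  refine ⟨⌊T⌋ - N₀, ?_, fun i => ?_⟩
  · have h1 : |(⌊T⌋:ℝ) - T| ≤ 1 := by
      have := Int.floor_le T
      have := Int.lt_floor_add_one T
      rw [abs_le]; constructor <;> linarith
    have h2 : |(N₀:ℝ)| ≤ ((t.sup (fun N => N.natAbs) : ℕ) : ℝ) := by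
      have : N₀.natAbs ≤ t.sup (fun N => N.natAbs) := Finset.le_sup hN₀t
      have hc : ((N₀.natAbs : ℕ) : ℝ) = |(N₀:ℝ)| := by
        rw [Nat.cast_natAbs]; push_cast; ring
      calc |(N₀:ℝ)| = ((N₀.natAbs : ℕ) : ℝ) := hc.symm
      _ ≤ _ := by exact_mod_cast this
    calc |((⌊T⌋ - N₀ : ℤ):ℝ) - T| = |((⌊T⌋:ℝ) - T) + (-(N₀:ℝ))| := by push_cast; ring_nf
    _ ≤ |(⌊T⌋:ℝ) - T| + |(-(N₀:ℝ))| := abs_add_le _ _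
    _ = |(⌊T⌋:ℝ) - T| + |(N₀:ℝ)| := by rw [abs_neg]
    _ ≤ ((t.sup (fun N => N.natAbs) : ℕ) : ℝ) + 1 := by linarith
  · obtain ⟨k, hk⟩ := Set.mem_iInter.mp hN₀ i
    refine ⟨k + ⌊(⌊T⌋:ℝ) * x i⌋ - ⌊(N₀:ℝ) * x i⌋, ?_⟩
    have : ((⌊T⌋ - N₀ : ℤ):ℝ) * x i - ((k + ⌊(⌊T⌋:ℝ) * x i⌋ - ⌊(N₀:ℝ) * x i⌋ : ℤ) : ℝ)
        = F ⌊T⌋ i - F N₀ i - k := by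
      simp only [hF]; push_cast; ring
    rw [this]
    linarith [hk]

lemma reduction {d : ℕ} (A : Set ℝ) (a x u : Fin d → ℝ)
    (hapos : ∀ i, 0 < a i) (haA : ∀ i, a i ∈ A)
    (hx0 : ∀ i, 0 < x i) (hu1 : ∀ i, |u i| ≤ 1) (hune : ∃ i, u i ≠ 0)
    (hr : 0 < ∑ i, x i * a i)
    (H : ∀ (m : ℤ) (τ : ℝ), ∑ i, x i * a i ≤ ∑ i, tphi ((m:ℝ) * x i + τ * u i) * a i) :
    ∃ J : Finset (Fin d), J.Nonempty ∧ J ≠ univ ∧ ∃ ξ : Fin d → ℝ,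
      (∀ j ∈ J, ξ j ∈ Set.Ioc (0:ℝ) 1) ∧
      (∀ m : ℤ, ∑ j ∈ J, ξ j * a j ≤ ∑ j ∈ J, tphi ((m:ℝ) * ξ j) * a j) ∧
      ∑ j ∈ J, ξ j * a j = ∑ i, x i * a i := by
  classical
  have hne : Nonempty (Fin d) := hune.elim fun i _ => ⟨i⟩
  set r := ∑ i, x i * a i with hrdef
  set S := ∑ i : Fin d, a i with hSdef
  have hSpos : 0 < S := Finset.sum_pos (fun i _ => hapos i) univ_nonempty
  -- Step 1 : ∑ u i * a i = 0
  have hstep1 : ∑ i, u i * a i = 0 := by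
    set μ := univ.inf' univ_nonempty x with hμdef
    have hμpos : 0 < μ := by
      rw [hμdef, Finset.lt_inf'_iff]
      exact fun i _ => hx0 i
    have key : ∀ t : ℝ, |t| < μ → 0 ≤ t * ∑ i, u i * a i := by
      intro t ht
      have h1 := H 1 t
      have h2 : ∑ i, tphi (((1:ℤ):ℝ) * x i + t * u i) * a i
          ≤ ∑ i, (x i + t * u i) * a i := by
        apply Finset.sum_le_sum
        intro i _
        have hpos : 0 < x i + t * u i := by
          have h3 : |t * u i| ≤ |t| := by
            rw [abs_mul]
            calc |t| * |u i| ≤ |t| * 1 := by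
                  apply mul_le_mul_of_nonneg_left (hu1 i) (abs_nonneg t)
            _ = |t| := mul_one _
          have h3' := abs_lt.mp (lt_of_le_of_lt h3 ht)
          have h4' : μ ≤ x i := Finset.inf'_le x (Finset.mem_univ i)
          linarith [h3'.1]
        have := tphi_le_self hpos
        have h5 : ((1:ℤ):ℝ) * x i + t * u i = x i + t * u i := by push_cast; ring
        rw [h5]
        exact mul_le_mul_of_nonneg_right this (le_of_lt (hapos i))
      have h6 : ∑ i, (x i + t * u i) * a i = r + t * ∑ i, u i * a i := by
        rw [Finset.mul_sum, ← Finset.sum_add_distrib]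
        apply Finset.sum_congr rfl
        intro i _; ring
      linarith
    have hp := key (μ/2) (by rw [abs_of_pos (by linarith)]; linarith)
    have hm := key (-(μ/2)) (by rw [abs_of_neg (by linarith)]; linarith)
    nlinarith [hp, hm]
  -- Step 2 : positive part of u nonempty
  have hposne : (univ.filter (fun j => 0 < u j)).Nonempty := by
    by_contra hcon
    rw [Finset.not_nonempty_iff_eq_empty, Finset.filter_eq_empty_iff] at hcon
    have : ∀ j ∈ univ, (0:ℝ) ≤ -(u j * a j) := by
      intro j _
      have : u j ≤ 0 := le_of_not_gt (hcon (Finset.mem_univ j))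
      have := le_of_lt (hapos j)
      nlinarith
    have hz : ∑ j, -(u j * a j) = 0 := by
      rw [Finset.sum_neg_distrib, hstep1, neg_zero]
    have := (Finset.sum_eq_zero_iff_of_nonneg this).mp hz
    obtain ⟨i, hi⟩ := hune
    have hi2 := this i (Finset.mem_univ i)
    have := hapos i
    apply hi
    nlinarith
  -- Step 3
  set P := univ.filter (fun j => 0 < u j) with hPdef
  set t₀ := P.inf' hposne (fun j => x j / u j) with ht₀def
  have ht₀pos : 0 < t₀ := by
    rw [ht₀def, Finset.lt_inf'_iff]
    intro j hj
    rw [hPdef, Finset.mem_filter] at hj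
    exact div_pos (hx0 j) hj.2
  obtain ⟨jstar, hjstarP, hjstar⟩ := Finset.exists_mem_eq_inf' hposne (fun j => x j / u j)
  set ξ : Fin d → ℝ := fun j => x j - t₀ * u j with hξdef
  have hξ0 : ∀ j, 0 ≤ ξ j := by
    intro j
    by_cases hj : 0 < u j
    · have hjP : j ∈ P := by rw [hPdef, Finset.mem_filter]; exact ⟨Finset.mem_univ j, hj⟩
      have : t₀ ≤ x j / u j := Finset.inf'_le (fun j => x j / u j) hjP
      have h2 : t₀ * u j ≤ x j := by
        rw [le_div_iff₀ hj] at this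
        linarith
      simp only [hξdef]; linarith
    · have : u j ≤ 0 := le_of_not_gt hj
      have h1 := hx0 j
      simp only [hξdef]
      nlinarith
  have hzero_imp : ∀ j, ξ j = 0 → 0 < u j := by
    intro j hzj
    by_contra hj
    have : u j ≤ 0 := le_of_not_gt hj
    have h1 := hx0 j
    simp only [hξdef] at hzj
    nlinarith
  have hξjstar : ξ jstar = 0 := by
    rw [hPdef, Finset.mem_filter] at hjstarP
    have hu : 0 < u jstar := hjstarP.2
    simp only [hξdef]
    rw [← ht₀def] at hjstar
    rw [hjstar]
    field_simp
    ring
  set J := univ.filter (fun j => 0 < ξ j) with hJdef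
  have hJne_univ : J ≠ univ := by
    intro hcon
    have : jstar ∈ J := hcon ▸ Finset.mem_univ jstar
    rw [hJdef, Finset.mem_filter] at this
    rw [hξjstar] at this
    exact lt_irrefl 0 this.2
  have hoffJ : ∀ j, j ∉ J → ξ j = 0 := by
    intro j hj
    rw [hJdef, Finset.mem_filter] at hj
    push_neg at hj
    have := hξ0 j
    have h2 := hj (Finset.mem_univ j)
    linarith
  -- value
  have hval : ∑ j ∈ J, ξ j * a j = r := by
    have h1 : ∑ j, ξ j * a j = ∑ j ∈ J, ξ j * a j := by
      rw [← Finset.sum_filter_add_sum_filter_not univ (fun j => 0 < ξ j) (fun j => ξ j * a j)]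
      rw [← hJdef]
      have : ∑ j ∈ univ.filter (fun j => ¬ 0 < ξ j), ξ j * a j = 0 := by
        apply Finset.sum_eq_zero
        intro j hj
        rw [Finset.mem_filter] at hj
        have : ξ j = 0 := by have := hξ0 j; linarith [le_of_not_gt hj.2]
        rw [this]; ring
      rw [this, add_zero]
    have h2 : ∑ j, ξ j * a j = r - t₀ * ∑ i, u i * a i := by
      rw [hrdef, Finset.mul_sum, ← Finset.sum_sub_distrib]
      apply Finset.sum_congr rfl
      intro j _
      simp only [hξdef]; ring
    rw [← h1, h2, hstep1, mul_zero, sub_zero]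
  have hJne : J.Nonempty := by
    rw [Finset.nonempty_iff_ne_empty]
    intro hcon
    rw [hcon, Finset.sum_empty] at hval
    rw [← hval] at hr
    exact lt_irrefl 0 hr
  -- Step 4 : constraints
  have hcon : ∀ m : ℤ, ∑ j ∈ J, ξ j * a j ≤ ∑ j ∈ J, tphi ((m:ℝ) * ξ j) * a j := by
    intro m
    apply le_of_forall_pos_le_add
    intro ε hε
    set ε' := ε / (2 * S) with hε'def
    have hε'pos : 0 < ε' := by positivity
    choose δf hδfpos husc using fun j => tphi_usc ((m:ℝ) * ξ j) ε' hε'pos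
    set δ := J.inf' hJne δf with hδdef
    have hδpos : 0 < δ := by
      rw [hδdef, Finset.lt_inf'_iff]
      exact fun j _ => hδfpos j
    set τ := min δ (min ε' 1) / 2 with hτdef
    have hτpos : 0 < τ := by
      rw [hτdef]
      have := lt_min hδpos (lt_min hε'pos one_pos)
      positivity
    have hτδ : τ < δ := by
      rw [hτdef]
      have h1 : min δ (min ε' 1) ≤ δ := min_le_left _ _
      linarith
    have hτε' : τ ≤ ε' := by
      rw [hτdef]
      have h1 : min δ (min ε' 1) ≤ ε' := le_trans (min_le_right _ _) (min_le_left _ _)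
      linarith
    have hτ1 : τ ≤ 1 := by
      rw [hτdef]
      have h1 : min δ (min ε' 1) ≤ 1 := le_trans (min_le_right _ _) (min_le_right _ _)
      linarith
    have hH := H m (τ - (m:ℝ) * t₀)
    have hcoord : ∀ i, (m:ℝ) * x i + (τ - (m:ℝ) * t₀) * u i = (m:ℝ) * ξ i + τ * u i := by
      intro i; simp only [hξdef]; ring
    rw [Finset.sum_congr rfl (fun i _ => by rw [hcoord i])] at hH
    -- split RHS of hH
    have hsplit : ∑ i, tphi ((m:ℝ) * ξ i + τ * u i) * a i
        = ∑ j ∈ J, tphi ((m:ℝ) * ξ j + τ * u j) * a j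
          + ∑ j ∈ univ.filter (fun j => ¬ 0 < ξ j), tphi ((m:ℝ) * ξ j + τ * u j) * a j := by
      rw [← Finset.sum_filter_add_sum_filter_not univ (fun j => 0 < ξ j)
        (fun j => tphi ((m:ℝ) * ξ j + τ * u j) * a j), ← hJdef]
    have hJbound : ∑ j ∈ J, tphi ((m:ℝ) * ξ j + τ * u j) * a j
        ≤ ∑ j ∈ J, tphi ((m:ℝ) * ξ j) * a j + ε' * S := by
      have h1 : ∀ j ∈ J, tphi ((m:ℝ) * ξ j + τ * u j) * a j
          ≤ (tphi ((m:ℝ) * ξ j) + ε') * a j := by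
        intro j hj
        have hd : δ ≤ δf j := Finset.inf'_le _ hj
        have habs : |((m:ℝ) * ξ j + τ * u j) - (m:ℝ) * ξ j - ((0:ℤ):ℝ)| < δf j := by
          have h2 : |τ * u j| ≤ τ := by
            rw [abs_mul, abs_of_pos hτpos]
            calc τ * |u j| ≤ τ * 1 := mul_le_mul_of_nonneg_left (hu1 j) (le_of_lt hτpos)
            _ = τ := mul_one _
          have : ((m:ℝ) * ξ j + τ * u j) - (m:ℝ) * ξ j - ((0:ℤ):ℝ) = τ * u j := by
            push_cast; ring
          rw [this]
          calc |τ * u j| ≤ τ := h2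
          _ < δ := hτδ
          _ ≤ δf j := hd
        have := husc j ((m:ℝ) * ξ j + τ * u j) 0 habs
        exact mul_le_mul_of_nonneg_right this (le_of_lt (hapos j))
      calc ∑ j ∈ J, tphi ((m:ℝ) * ξ j + τ * u j) * a j
          ≤ ∑ j ∈ J, (tphi ((m:ℝ) * ξ j) + ε') * a j := Finset.sum_le_sum h1
      _ = ∑ j ∈ J, tphi ((m:ℝ) * ξ j) * a j + ε' * ∑ j ∈ J, a j := by
          rw [Finset.mul_sum, ← Finset.sum_add_distrib]
          exact Finset.sum_congr rfl (fun j _ => by ring)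
      _ ≤ ∑ j ∈ J, tphi ((m:ℝ) * ξ j) * a j + ε' * S := by
          have : ∑ j ∈ J, a j ≤ S := by
            rw [hSdef]
            apply Finset.sum_le_sum_of_subset_of_nonneg (Finset.subset_univ J)
            exact fun i _ _ => le_of_lt (hapos i)
          nlinarith [hε'pos]
    have hNbound : ∑ j ∈ univ.filter (fun j => ¬ 0 < ξ j), tphi ((m:ℝ) * ξ j + τ * u j) * a j
        ≤ ε' * S := by
      have h1 : ∀ j ∈ univ.filter (fun j => ¬ 0 < ξ j),
          tphi ((m:ℝ) * ξ j + τ * u j) * a j ≤ ε' * a j := by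
        intro j hj
        rw [Finset.mem_filter] at hj
        have hz : ξ j = 0 := by have := hξ0 j; linarith [le_of_not_gt hj.2]
        have hupos : 0 < u j := hzero_imp j hz
        have harg : (m:ℝ) * ξ j + τ * u j = τ * u j := by rw [hz]; ring
        rw [harg]
        have h2 : 0 < τ * u j := mul_pos hτpos hupos
        have h3 : τ * u j ≤ ε' := by
          calc τ * u j ≤ τ * 1 := mul_le_mul_of_nonneg_left (le_trans (le_abs_self _) (hu1 j)) (le_of_lt hτpos)
          _ = τ := mul_one _
          _ ≤ ε' := hτε'
        have := tphi_le_self h2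
        have h4 : tphi (τ * u j) ≤ ε' := le_trans this h3
        exact mul_le_mul_of_nonneg_right h4 (le_of_lt (hapos j))
      calc ∑ j ∈ univ.filter (fun j => ¬ 0 < ξ j), tphi ((m:ℝ) * ξ j + τ * u j) * a j
          ≤ ∑ j ∈ univ.filter (fun j => ¬ 0 < ξ j), ε' * a j := Finset.sum_le_sum h1
      _ = ε' * ∑ j ∈ univ.filter (fun j => ¬ 0 < ξ j), a j := by rw [Finset.mul_sum]
      _ ≤ ε' * S := by
          have : ∑ j ∈ univ.filter (fun j => ¬ 0 < ξ j), a j ≤ S := by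
            rw [hSdef]
            apply Finset.sum_le_sum_of_subset_of_nonneg (Finset.subset_univ _)
            exact fun i _ _ => le_of_lt (hapos i)
          nlinarith [hε'pos]
    have hfinal : r ≤ ∑ j ∈ J, tphi ((m:ℝ) * ξ j) * a j + 2 * (ε' * S) := by
      rw [hsplit] at hH
      linarith
    rw [hval]
    have : 2 * (ε' * S) = ε := by
      rw [hε'def]; field_simp
    linarith
  -- Step 5 : ξ ≤ 1 on J
  have hξle1 : ∀ j ∈ J, ξ j ≤ 1 := by
    have h1 := hcon 1
    have h2 : ∀ j ∈ J, tphi (((1:ℤ):ℝ) * ξ j) = tphi (ξ j) := by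
      intro j _; norm_num
    have h1' : ∑ j ∈ J, ξ j * a j ≤ ∑ j ∈ J, tphi (ξ j) * a j :=
      le_trans h1 (le_of_eq (Finset.sum_congr rfl fun j hj => by rw [h2 j hj]))
    have h3 : ∀ j ∈ J, tphi (ξ j) * a j ≤ ξ j * a j := by
      intro j hj
      rw [hJdef, Finset.mem_filter] at hj
      exact mul_le_mul_of_nonneg_right (tphi_le_self hj.2) (le_of_lt (hapos j))
    have h4 : ∑ j ∈ J, (ξ j * a j - tphi (ξ j) * a j) = 0 := by
      rw [Finset.sum_sub_distrib]
      have h5 := Finset.sum_le_sum h3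
      linarith [h1']
    have h6 := (Finset.sum_eq_zero_iff_of_nonneg (fun j hj => by
      have := h3 j hj; linarith)).mp h4
    intro j hj
    have h7 := h6 j hj
    rw [hJdef, Finset.mem_filter] at hj
    have h8 : tphi (ξ j) = ξ j := by
      have h9 : (ξ j - tphi (ξ j)) * a j = ξ j * a j - tphi (ξ j) * a j := by ring
      rw [h7] at h9
      -- h9 : (ξ j - tphi (ξ j)) * a j = 0
      rcases mul_eq_zero.mp h9 with h10 | h10
      · linarith
      · exact absurd h10 (ne_of_gt (hapos j))
    exact tphi_self_imp hj.2 h8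
  refine ⟨J, hJne, hJne_univ, ξ, ?_, hcon, hval⟩
  intro j hj
  have hj2 := hj
  rw [hJdef, Finset.mem_filter] at hj2
  exact ⟨hj2.2, hξle1 j hj⟩

lemma tendsto_abs_event {f : ℕ → ℝ} {L δ : ℝ}
    (h : Tendsto f atTop (nhds L)) (hδ : 0 < δ) :
    ∀ᶠ n in atTop, |f n - L| < δ := by
  have := h (Metric.ball_mem_nhds L hδ)
  simpa [Real.dist_eq] using this

lemma hard_case {d : ℕ} (hd : 1 ≤ d) (A : Set ℝ)
    (x a : ℕ → Fin d → ℝ) (X α : Fin d → ℝ) (r : ℝ)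
    (hx : ∀ n i, x n i ∈ Set.Ioc (0:ℝ) 1)
    (haA : ∀ n i, a n i ∈ A)
    (haI : ∀ n i, a n i ∈ Set.Icc (0:ℝ) 1)
    (hcon : ∀ n (m : ℤ), ∑ i, x n i * a n i ≤ ∑ i, tphi ((m:ℝ) * x n i) * a n i)
    (tx : ∀ i, Tendsto (fun n => x n i) atTop (nhds (X i)))
    (ta : ∀ i, Tendsto (fun n => a n i) atTop (nhds (α i)))
    (ea : ∀ i, 0 < α i → ∀ᶠ n in atTop, a n i = α i)
    (hsr : Tendsto (fun n => ∑ i, x n i * a n i) atTop (nhds r))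
    (hsne : ∀ n, ∑ i, x n i * a n i ≠ r)
    (hr : 0 < r) :
    ∃ J : Finset (Fin d), J.Nonempty ∧ J ≠ univ ∧ ∃ ξ β : Fin d → ℝ,
      (∀ j ∈ J, ξ j ∈ Set.Ioc (0:ℝ) 1) ∧ (∀ j ∈ J, β j ∈ A) ∧
      (∀ m : ℤ, ∑ j ∈ J, ξ j * β j ≤ ∑ j ∈ J, tphi ((m:ℝ) * ξ j) * β j) ∧
      ∑ j ∈ J, ξ j * β j = r := by
  classical
  have hdne : Nonempty (Fin d) := Fin.pos_iff_nonempty.mp hd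
  have hX0 : ∀ i, 0 ≤ X i := fun i => ge_of_tendsto' (tx i) (fun n => (hx n i).1.le)
  have hX1 : ∀ i, X i ≤ 1 := fun i => le_of_tendsto' (tx i) (fun n => (hx n i).2)
  have hα0 : ∀ i, 0 ≤ α i := fun i => ge_of_tendsto' (ta i) (fun n => (haI n i).1)
  have hα1 : ∀ i, α i ≤ 1 := fun i => le_of_tendsto' (ta i) (fun n => (haI n i).2)
  have hlim : Tendsto (fun n => ∑ i, x n i * a n i) atTop (nhds (∑ i, X i * α i)) :=
    tendsto_finset_sum _ (fun i _ => (tx i).mul (ta i))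
  have hreq : r = ∑ i, X i * α i := tendsto_nhds_unique hsr hlim
  set P := univ.filter (fun i => 0 < α i ∧ 0 < X i) with hPdef
  have hPsum : ∑ j ∈ P, X j * α j = ∑ i, X i * α i := by
    rw [← Finset.sum_filter_add_sum_filter_not univ (fun i => 0 < α i ∧ 0 < X i)
      (fun i => X i * α i), ← hPdef]
    have : ∑ j ∈ univ.filter (fun i => ¬(0 < α i ∧ 0 < X i)), X j * α j = 0 := by
      apply Finset.sum_eq_zero
      intro j hj
      rw [Finset.mem_filter] at hj
      rcases not_and_or.mp hj.2 with h | h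
      · have : α j = 0 := le_antisymm (le_of_not_gt h) (hα0 j)
        rw [this, mul_zero]
      · have : X j = 0 := le_antisymm (le_of_not_gt h) (hX0 j)
        rw [this, zero_mul]
    rw [this, add_zero]
  have hrP : ∑ j ∈ P, X j * α j = r := hPsum.trans hreq.symm
  by_cases hPuniv : P = univ
  · -- P = univ : the full case, via the reduction lemma
    have hmemP : ∀ i, i ∈ P := fun i => hPuniv ▸ Finset.mem_univ i
    have hαpos : ∀ i, 0 < α i := fun i => ((Finset.mem_filter.mp (hmemP i)).2).1
    have hXpos : ∀ i, 0 < X i := fun i => ((Finset.mem_filter.mp (hmemP i)).2).2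
    have eaall : ∀ᶠ n in atTop, ∀ i, a n i = α i :=
      eventually_all.mpr (fun i => ea i (hαpos i))
    set e : ℕ → Fin d → ℝ := fun n i => x n i - X i with hedef
    set Mn : ℕ → ℝ := fun n => univ.sup' univ_nonempty (fun i => |e n i|) with hMndef
    have hMn0 : ∀ n, 0 ≤ Mn n := by
      intro n
      obtain ⟨i⟩ := hdne
      exact le_trans (abs_nonneg (e n i))
        (Finset.le_sup' (fun i => |e n i|) (Finset.mem_univ i))
    have hMe : ∀ n i, |e n i| ≤ Mn n := fun n i =>
      Finset.le_sup' (fun i => |e n i|) (Finset.mem_univ i)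
    set u : ℕ → Fin d → ℝ := fun n i => e n i / Mn n with hudef
    have hu1 : ∀ n i, |u n i| ≤ 1 := by
      intro n i
      by_cases h : Mn n = 0
      · simp [hudef, h]
      · have hM : 0 < Mn n := lt_of_le_of_ne (hMn0 n) (Ne.symm h)
        rw [hudef]
        simp only
        rw [abs_div, abs_of_pos hM, div_le_one hM]
        exact hMe n i
    have humem : ∀ n, u n ∈ Set.pi Set.univ (fun _ : Fin d => Set.Icc (-1:ℝ) 1) := by
      intro n i _
      exact abs_le.mp (hu1 n i)
    have hcpt : IsCompact (Set.pi Set.univ (fun _ : Fin d => Set.Icc (-1:ℝ) 1)) :=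
      isCompact_univ_pi (fun _ => isCompact_Icc)
    obtain ⟨U, hUmem, ψ, hψ, hψtend⟩ := hcpt.tendsto_subseq humem
    have hψat : Tendsto ψ atTop atTop := hψ.tendsto_atTop
    have hUic : ∀ i, |U i| ≤ 1 := fun i => abs_le.mpr (hUmem i (Set.mem_univ i))
    have htu : ∀ i, Tendsto (fun k => u (ψ k) i) atTop (nhds (U i)) := by
      intro i
      exact (tendsto_pi_nhds.mp hψtend) i
    -- Mn tends to zero
    have hMn_tend : Tendsto Mn atTop (nhds 0) := by
      rw [Metric.tendsto_atTop]
      intro ε hε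
      have hev : ∀ᶠ n in atTop, ∀ i, |e n i| < ε :=
        eventually_all.mpr (fun i => tendsto_abs_event (tx i) hε)
      obtain ⟨N, hN⟩ := eventually_atTop.mp hev
      refine ⟨N, fun n hn => ?_⟩
      rw [Real.dist_eq, sub_zero, abs_of_nonneg (hMn0 n)]
      rw [hMndef]
      simp only
      rw [Finset.sup'_lt_iff]
      exact fun i _ => hN n hn i
    -- eventually Mn > 0 (since values differ from r)
    have hev0 : ∀ᶠ n in atTop, 0 < Mn n := by
      filter_upwards [eaall] with n hn
      have hne0 : ∃ i, e n i ≠ 0 := by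
        by_contra hc
        push_neg at hc
        apply hsne n
        have hxX : ∀ i, x n i = X i := by
          intro i
          have := hc i
          rw [hedef] at this
          simp only at this
          linarith [sub_eq_zero.mp this]
        calc ∑ i, x n i * a n i = ∑ i, X i * α i := by
              apply Finset.sum_congr rfl
              intro i _
              rw [hxX i, hn i]
        _ = r := hreq.symm
      obtain ⟨i1, hi1⟩ := hne0
      exact lt_of_lt_of_le (abs_pos.mpr hi1) (hMe n i1)
    have hev1 : ∀ᶠ n in atTop, ∃ i, |u n i| = 1 := by
      filter_upwards [hev0] with n hn
      have hn' : 0 < Mn n := hn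
      obtain ⟨i2, _, hi2⟩ := Finset.exists_mem_eq_sup' univ_nonempty (fun i => |e n i|)
      have hMni2 : Mn n = |e n i2| := hi2
      refine ⟨i2, ?_⟩
      show |e n i2 / Mn n| = 1
      rw [abs_div, abs_of_pos hn', ← hMni2]
      exact div_self (ne_of_gt hn')
    -- a fixed index with |U i₀| = 1
    have hfreq_i : ∃ i₀, ∃ᶠ k in atTop, |u (ψ k) i₀| = 1 := by
      by_contra hc
      push_neg at hc
      have h1 : ∀ᶠ k in atTop, ∀ i, ¬ |u (ψ k) i| = 1 :=
        eventually_all.mpr (fun i => (hc i))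
      have h2 : ∀ᶠ k in atTop, ∃ i, |u (ψ k) i| = 1 := hψat.eventually hev1
      obtain ⟨k, h3, i, h4⟩ := (h1.and h2).exists
      exact h3 i h4
    obtain ⟨i₀, hfreq⟩ := hfreq_i
    have hU1 : |U i₀| = 1 := by
      have hclosed : IsClosed {v : ℝ | |v| = 1} :=
        isClosed_eq continuous_abs continuous_const
      exact hclosed.mem_of_frequently_of_tendsto hfreq (htu i₀)
    have hune : ∃ i, U i ≠ 0 := ⟨i₀, by intro h; rw [h] at hU1; norm_num at hU1⟩
    have hrel : ∀ n, Mn n ≠ 0 → ∀ i, e n i = Mn n * u n i := by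
      intro n hM i
      rw [hudef]
      field_simp
    -- subsequenced facts
    have hsr' : Tendsto (fun k => ∑ i, x (ψ k) i * a (ψ k) i) atTop (nhds r) :=
      hsr.comp hψat
    have eaall' : ∀ᶠ k in atTop, ∀ i, a (ψ k) i = α i := hψat.eventually eaall
    have hev0' : ∀ᶠ k in atTop, 0 < Mn (ψ k) := hψat.eventually hev0
    have hMn' : Tendsto (fun k => Mn (ψ k)) atTop (nhds 0) := hMn_tend.comp hψat
    -- THE KEY LIMIT CONSTRAINTS
    have KEY : ∀ (m : ℤ) (τ : ℝ),
        ∑ i, X i * α i ≤ ∑ i, tphi ((m:ℝ) * X i + τ * U i) * α i := by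
      intro m τ
      apply le_of_forall_pos_le_add
      intro ε hε
      have hdpos : (0:ℝ) < d + 1 := by positivity
      set ε' := ε / (d + 1) with hε'def
      have hε'pos : 0 < ε' := by positivity
      choose δf hδfpos husc using fun i => tphi_usc ((m:ℝ) * X i + τ * U i) ε' hε'pos
      set δ := univ.inf' univ_nonempty δf with hδdef
      have hδpos : 0 < δ := by
        rw [hδdef, Finset.lt_inf'_iff]
        exact fun i _ => hδfpos i
      obtain ⟨G, hG0, hsynd⟩ := synd X (half_pos hδpos)
      set C := G + |(m:ℝ)| + |τ| + 1 with hCdef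
      have hCpos : 0 < C := by
        rw [hCdef]; positivity
      have F2 : ∀ᶠ k in atTop, |∑ i, x (ψ k) i * a (ψ k) i - r| < ε' :=
        tendsto_abs_event hsr' hε'pos
      have F4 : ∀ᶠ k in atTop, Mn (ψ k) * C < δ/4 := by
        have h1 : ∀ᶠ k in atTop, |Mn (ψ k) - 0| < δ/4/C :=
          tendsto_abs_event hMn' (by positivity)
        filter_upwards [h1, hev0'] with k hk hk0
        rw [sub_zero, abs_of_pos hk0] at hk
        calc Mn (ψ k) * C < (δ/4/C) * C := by
              apply mul_lt_mul_of_pos_right hk hCpos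
        _ = δ/4 := div_mul_cancel₀ _ (ne_of_gt hCpos)
      have F5 : ∀ᶠ k in atTop, ∀ i, |τ| * |u (ψ k) i - U i| < δ/4 := by
        apply eventually_all.mpr
        intro i
        have h1 : ∀ᶠ k in atTop, |u (ψ k) i - U i| < δ/(4*(|τ|+1)) :=
          tendsto_abs_event (htu i) (by positivity)
        filter_upwards [h1] with k hk
        have h2 : |τ| * |u (ψ k) i - U i| ≤ |τ| * (δ/(4*(|τ|+1))) := by
          apply mul_le_mul_of_nonneg_left hk.le (abs_nonneg τ)
        have h3 : |τ| * (δ/(4*(|τ|+1))) < δ/4 := by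
          rw [mul_div_assoc']
          rw [div_lt_div_iff₀ (by positivity) (by norm_num : (0:ℝ) < 4)]
          nlinarith [hδpos, abs_nonneg τ]
        linarith
      obtain ⟨k, hFall⟩ := (eaall'.and (F2.and (hev0'.and (F4.and F5)))).exists
      obtain ⟨hF1, hF2, hF3, hF4, hF5⟩ := hFall
      set MM := Mn (ψ k) with hMMdef
      have hMMne : MM ≠ 0 := ne_of_gt hF3
      obtain ⟨N, hNT, hNX⟩ := hsynd (τ / MM - m)
      set Mint := m + N with hMintdef
      have hcon2 := hcon (ψ k) Mint
      have hs2 : ∑ i, x (ψ k) i * a (ψ k) i > r - ε' := by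
        have := abs_lt.mp hF2
        linarith [this.1]
      have hterm : ∀ i, tphi ((Mint:ℝ) * x (ψ k) i) ≤ tphi ((m:ℝ) * X i + τ * U i) + ε' := by
        intro i
        obtain ⟨ki, hki⟩ := hNX i
        apply husc i _ ki
        have hxe : x (ψ k) i = X i + MM * u (ψ k) i := by
          have := hrel (ψ k) hMMne i
          rw [hedef] at this
          simp only at this
          rw [hMMdef]
          linarith
        have hid : (Mint:ℝ) * x (ψ k) i - ((m:ℝ) * X i + τ * U i) - ki
            = ((N:ℝ) * X i - ki) + (((Mint:ℝ) * MM - τ) * u (ψ k) i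
              + τ * (u (ψ k) i - U i)) := by
          rw [hxe, hMintdef]
          push_cast
          ring
        have hb1 : |(N:ℝ) * X i - ki| < δ/2 := hki
        have hb2 : |(Mint:ℝ) * MM - τ| ≤ G * MM := by
          have h1 : (Mint:ℝ) * MM - τ = ((N:ℝ) - (τ / MM - m)) * MM := by
            rw [hMintdef]
            push_cast
            field_simp
            ring
          rw [h1, abs_mul, abs_of_pos hF3]
          apply mul_le_mul_of_nonneg_right hNT (le_of_lt hF3)
        have hb2' : |((Mint:ℝ) * MM - τ) * u (ψ k) i| < δ/4 := by
          rw [abs_mul]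
          calc |(Mint:ℝ) * MM - τ| * |u (ψ k) i| ≤ |(Mint:ℝ) * MM - τ| * 1 := by
                apply mul_le_mul_of_nonneg_left (hu1 (ψ k) i) (abs_nonneg _)
          _ = |(Mint:ℝ) * MM - τ| := mul_one _
          _ ≤ G * MM := hb2
          _ ≤ C * MM := by
              apply mul_le_mul_of_nonneg_right _ (le_of_lt hF3)
              rw [hCdef]
              have := abs_nonneg (m:ℝ)
              have := abs_nonneg τ
              linarith
          _ = MM * C := by ring
          _ < δ/4 := hF4
        have hb3 : |τ * (u (ψ k) i - U i)| < δ/4 := by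
          rw [abs_mul]
          exact hF5 i
        rw [hid]
        calc |((N:ℝ) * X i - ki) + (((Mint:ℝ) * MM - τ) * u (ψ k) i
              + τ * (u (ψ k) i - U i))|
            ≤ |(N:ℝ) * X i - ki| + |(((Mint:ℝ) * MM - τ) * u (ψ k) i
              + τ * (u (ψ k) i - U i))| := abs_add_le _ _
        _ ≤ |(N:ℝ) * X i - ki| + (|((Mint:ℝ) * MM - τ) * u (ψ k) i|
              + |τ * (u (ψ k) i - U i)|) := by
            have := abs_add_le (((Mint:ℝ) * MM - τ) * u (ψ k) i) (τ * (u (ψ k) i - U i))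
            linarith
        _ < δ/2 + (δ/4 + δ/4) := by linarith
        _ = δ := by ring
        _ ≤ δf i := Finset.inf'_le δf (Finset.mem_univ i)
      have hsum2 : ∑ i, tphi ((Mint:ℝ) * x (ψ k) i) * a (ψ k) i
          ≤ ∑ i, (tphi ((m:ℝ) * X i + τ * U i) + ε') * α i := by
        apply Finset.sum_le_sum
        intro i _
        rw [hF1 i]
        exact mul_le_mul_of_nonneg_right (hterm i) (hα0 i)
      have hsum3 : ∑ i, (tphi ((m:ℝ) * X i + τ * U i) + ε') * α i
          = ∑ i, tphi ((m:ℝ) * X i + τ * U i) * α i + ε' * ∑ i, α i := by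
        rw [Finset.mul_sum, ← Finset.sum_add_distrib]
        exact Finset.sum_congr rfl (fun i _ => by ring)
      have hαd : ∑ i : Fin d, α i ≤ d := by
        calc ∑ i : Fin d, α i ≤ ∑ _i : Fin d, (1:ℝ) := Finset.sum_le_sum (fun i _ => hα1 i)
        _ = d := by simp
      have : r - ε' < ∑ i, tphi ((m:ℝ) * X i + τ * U i) * α i + ε' * d := by
        have h6 : ε' * ∑ i, α i ≤ ε' * d := mul_le_mul_of_nonneg_left hαd (le_of_lt hε'pos)
        calc r - ε' < ∑ i, x (ψ k) i * a (ψ k) i := hs2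
        _ ≤ ∑ i, tphi ((Mint:ℝ) * x (ψ k) i) * a (ψ k) i := hcon2
        _ ≤ ∑ i, (tphi ((m:ℝ) * X i + τ * U i) + ε') * α i := hsum2
        _ = ∑ i, tphi ((m:ℝ) * X i + τ * U i) * α i + ε' * ∑ i, α i := hsum3
        _ ≤ ∑ i, tphi ((m:ℝ) * X i + τ * U i) * α i + ε' * d := by linarith
      have hεeq : ε' * (d + 1) = ε := by
        rw [hε'def]
        exact div_mul_cancel₀ _ (ne_of_gt hdpos)
      rw [← hreq]
      linarith [this]
    -- apply the reduction lemma
    have haA' : ∀ i, α i ∈ A := by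
      intro i
      obtain ⟨n, hn⟩ := (ea i (hαpos i)).exists
      rw [← hn]
      exact haA n i
    have hr' : 0 < ∑ i, X i * α i := by rw [← hreq]; exact hr
    obtain ⟨J, hJne, hJuniv, ξ, hξIoc, hξcon, hξval⟩ :=
      reduction A α X U hαpos haA' hXpos hUic hune hr' KEY
    exact ⟨J, hJne, hJuniv, ξ, α, hξIoc, fun j _ => haA' j, hξcon,
      by rw [hξval, ← hreq]⟩
  · -- P ≠ univ : degenerate coordinates exist
    have hPne : P.Nonempty := by
      rw [Finset.nonempty_iff_ne_empty]
      intro hc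
      rw [hc, Finset.sum_empty] at hrP
      exact absurd hrP.symm (ne_of_gt hr)
    -- Stage A : constraints for m ≥ 1
    have stageA : ∀ m : ℤ, 1 ≤ m →
        ∑ j ∈ P, X j * α j ≤ ∑ j ∈ P, tphi ((m:ℝ) * X j) * α j := by
      intro m hm
      have hm0 : (0:ℝ) < m := by exact_mod_cast hm
      apply le_of_forall_pos_le_add
      intro ε hε
      have hdpos : (0:ℝ) < 2 * d + 1 := by positivity
      set ε' := ε / (2 * d + 1) with hε'def
      have hε'pos : 0 < ε' := by positivity
      choose δf hδfpos husc using fun j => tphi_usc ((m:ℝ) * X j) ε' hε'pos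
      have E1 : ∀ᶠ n in atTop, ∀ j, |(m:ℝ) * x n j - (m:ℝ) * X j| < δf j := by
        apply eventually_all.mpr
        intro j
        have h1 : Tendsto (fun n => (m:ℝ) * x n j) atTop (nhds ((m:ℝ) * X j)) :=
          (tx j).const_mul _
        exact tendsto_abs_event h1 (hδfpos j)
      have E2 : ∀ᶠ n in atTop, ∀ j, (j ∈ P → a n j = α j) := by
        apply eventually_all.mpr
        intro j
        by_cases hj : j ∈ P
        · exact (ea j ((Finset.mem_filter.mp hj).2).1).mono (fun n h _ => h)
        · exact Eventually.of_forall (fun n h => absurd h hj)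
      have E3 : ∀ᶠ n in atTop, ∀ j, (j ∉ P → tphi ((m:ℝ) * x n j) * a n j ≤ ε') := by
        apply eventually_all.mpr
        intro j
        by_cases hj : j ∈ P
        · exact Eventually.of_forall (fun n h => absurd hj h)
        · have hnot : ¬(0 < α j ∧ 0 < X j) := by
            intro hcontra
            exact hj (Finset.mem_filter.mpr ⟨Finset.mem_univ j, hcontra⟩)
          rcases not_and_or.mp hnot with h | h
          · have hαz : α j = 0 := le_antisymm (le_of_not_gt h) (hα0 j)
            have h1 : ∀ᶠ n in atTop, |a n j - α j| < ε' := tendsto_abs_event (ta j) hε'pos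
            filter_upwards [h1] with n hn _
            rw [hαz, sub_zero] at hn
            rw [abs_of_nonneg (haI n j).1] at hn
            calc tphi ((m:ℝ) * x n j) * a n j ≤ 1 * a n j :=
                  mul_le_mul_of_nonneg_right (tphi_le_one _) (haI n j).1
            _ = a n j := one_mul _
            _ ≤ ε' := hn.le
          · have hXz : X j = 0 := le_antisymm (le_of_not_gt h) (hX0 j)
            have hδ2 : (0:ℝ) < min ε' 1 / m := by positivity
            have h1 : ∀ᶠ n in atTop, |x n j - X j| < min ε' 1 / m :=
              tendsto_abs_event (tx j) hδ2
            filter_upwards [h1] with n hn _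
            rw [hXz, sub_zero, abs_of_pos (hx n j).1] at hn
            have h2 : 0 < (m:ℝ) * x n j := mul_pos hm0 (hx n j).1
            have h3 : (m:ℝ) * x n j < min ε' 1 := by
              rw [lt_div_iff₀ hm0] at hn
              calc (m:ℝ) * x n j = x n j * m := mul_comm _ _
              _ < min ε' 1 := hn
            have h4 : tphi ((m:ℝ) * x n j) = (m:ℝ) * x n j :=
              tphi_of_Ioc h2 (le_of_lt (lt_of_lt_of_le h3 (min_le_right _ _)))
            calc tphi ((m:ℝ) * x n j) * a n j ≤ tphi ((m:ℝ) * x n j) * 1 :=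
                  mul_le_mul_of_nonneg_left (haI n j).2 (le_of_lt (tphi_pos _))
            _ = tphi ((m:ℝ) * x n j) := mul_one _
            _ = (m:ℝ) * x n j := h4
            _ ≤ ε' := le_of_lt (lt_of_lt_of_le h3 (min_le_left _ _))
      have E4 : ∀ᶠ n in atTop, |∑ i, x n i * a n i - r| < ε' :=
        tendsto_abs_event hsr hε'pos
      obtain ⟨n, hall⟩ := (E1.and (E2.and (E3.and E4))).exists
      obtain ⟨h1, h2, h3, h4⟩ := hall
      have hs := hcon n m
      have hsplit := Finset.sum_filter_add_sum_filter_not univ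
        (fun i => 0 < α i ∧ 0 < X i) (fun i => tphi ((m:ℝ) * x n i) * a n i)
      have hSP : ∑ j ∈ P, tphi ((m:ℝ) * x n j) * a n j
          ≤ ∑ j ∈ P, tphi ((m:ℝ) * X j) * α j + ε' * d := by
        have hstep : ∑ j ∈ P, tphi ((m:ℝ) * x n j) * a n j
            = ∑ j ∈ P, tphi ((m:ℝ) * x n j) * α j :=
          Finset.sum_congr rfl (fun j hj => by rw [h2 j hj])
        rw [hstep]
        have hstep2 : ∑ j ∈ P, tphi ((m:ℝ) * x n j) * α j
            ≤ ∑ j ∈ P, (tphi ((m:ℝ) * X j) + ε') * α j := by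
          apply Finset.sum_le_sum
          intro j _
          apply mul_le_mul_of_nonneg_right _ (hα0 j)
          apply husc j _ 0
          have := h1 j
          rw [show ((0:ℤ):ℝ) = 0 by norm_num, sub_zero]
          exact this
        have hstep3 : ∑ j ∈ P, (tphi ((m:ℝ) * X j) + ε') * α j
            = ∑ j ∈ P, tphi ((m:ℝ) * X j) * α j + ε' * ∑ j ∈ P, α j := by
          rw [Finset.mul_sum, ← Finset.sum_add_distrib]
          exact Finset.sum_congr rfl (fun j _ => by ring)
        have hstep4 : ∑ j ∈ P, α j ≤ d := by
          calc ∑ j ∈ P, α j ≤ ∑ _j ∈ P, (1:ℝ) := Finset.sum_le_sum (fun j _ => hα1 j)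
          _ = P.card := by simp
          _ ≤ d := by
              have := Finset.card_le_univ P
              simpa using this
        have := mul_le_mul_of_nonneg_left hstep4 (le_of_lt hε'pos)
        linarith
      have hSQ : ∑ j ∈ univ.filter (fun i => ¬(0 < α i ∧ 0 < X i)),
          tphi ((m:ℝ) * x n j) * a n j ≤ ε' * d := by
        have hb : ∀ j ∈ univ.filter (fun i => ¬(0 < α i ∧ 0 < X i)),
            tphi ((m:ℝ) * x n j) * a n j ≤ ε' := by
          intro j hj
          rw [Finset.mem_filter] at hj
          apply h3 j
          intro hjP
          rw [hPdef, Finset.mem_filter] at hjP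
          exact hj.2 hjP.2
        calc ∑ j ∈ univ.filter (fun i => ¬(0 < α i ∧ 0 < X i)),
            tphi ((m:ℝ) * x n j) * a n j
            ≤ ∑ _j ∈ univ.filter (fun i => ¬(0 < α i ∧ 0 < X i)), ε' :=
              Finset.sum_le_sum hb
        _ = (univ.filter (fun i => ¬(0 < α i ∧ 0 < X i))).card * ε' := by
            rw [Finset.sum_const, nsmul_eq_mul]
        _ ≤ d * ε' := by
            apply mul_le_mul_of_nonneg_right _ (le_of_lt hε'pos)
            have := Finset.card_le_univ (univ.filter (fun i => ¬(0 < α i ∧ 0 < X i)))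
            simp only [card_univ, Fintype.card_fin] at this
            exact_mod_cast this
        _ = ε' * d := mul_comm _ _
      have h5 : r - ε' < ∑ i, x n i * a n i := by
        have := abs_lt.mp h4
        linarith [this.1]
      have hεeq : ε' * (2 * d + 1) = ε := by
        rw [hε'def]; exact div_mul_cancel₀ _ (ne_of_gt hdpos)
      rw [hrP]
      have hPsub : ∑ j ∈ P, tphi ((m:ℝ) * x n j) * a n j
          + ∑ j ∈ univ.filter (fun i => ¬(0 < α i ∧ 0 < X i)),
            tphi ((m:ℝ) * x n j) * a n j = ∑ i, tphi ((m:ℝ) * x n i) * a n i := by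
        rw [hPdef]
        exact hsplit
      linarith [hs, hSP, hSQ, h5, hPsub, hεeq]
    -- Stage B : all m via the syndetic return lemma
    have stageB : ∀ m : ℤ,
        ∑ j ∈ P, X j * α j ≤ ∑ j ∈ P, tphi ((m:ℝ) * X j) * α j := by
      intro m
      apply le_of_forall_pos_le_add
      intro ε hε
      have hdpos : (0:ℝ) < d + 1 := by positivity
      set ε' := ε / (d + 1) with hε'def
      have hε'pos : 0 < ε' := by positivity
      choose δf hδfpos husc using fun j => tphi_usc ((m:ℝ) * X j) ε' hε'pos
      set δ := univ.inf' univ_nonempty δf with hδdef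
      have hδpos : 0 < δ := by
        rw [hδdef, Finset.lt_inf'_iff]
        exact fun i _ => hδfpos i
      obtain ⟨G, hG0, hsynd⟩ := synd X hδpos
      obtain ⟨N, hNT, hNX⟩ := hsynd (G + 1 + |1 - (m:ℝ)|)
      have hN1 : 1 ≤ m + N := by
        have h1 := (abs_le.mp hNT).1
        have h2 := le_abs_self (1 - (m:ℝ))
        have h3 : (1:ℝ) ≤ (m:ℝ) + (N:ℝ) := by linarith
        exact_mod_cast h3
      have hA := stageA (m + N) hN1
      have hterm : ∀ j, tphi (((m + N : ℤ):ℝ) * X j) ≤ tphi ((m:ℝ) * X j) + ε' := by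
        intro j
        obtain ⟨kj, hkj⟩ := hNX j
        apply husc j _ kj
        have : ((m + N : ℤ):ℝ) * X j - (m:ℝ) * X j - kj = (N:ℝ) * X j - kj := by
          push_cast; ring
        rw [this]
        calc |(N:ℝ) * X j - kj| < δ := hkj
        _ ≤ δf j := Finset.inf'_le δf (Finset.mem_univ j)
      have hsum : ∑ j ∈ P, tphi (((m + N:ℤ):ℝ) * X j) * α j
          ≤ ∑ j ∈ P, tphi ((m:ℝ) * X j) * α j + ε' * d := by
        have h1 : ∑ j ∈ P, tphi (((m + N:ℤ):ℝ) * X j) * α j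
            ≤ ∑ j ∈ P, (tphi ((m:ℝ) * X j) + ε') * α j :=
          Finset.sum_le_sum (fun j _ =>
            mul_le_mul_of_nonneg_right (hterm j) (hα0 j))
        have h2 : ∑ j ∈ P, (tphi ((m:ℝ) * X j) + ε') * α j
            = ∑ j ∈ P, tphi ((m:ℝ) * X j) * α j + ε' * ∑ j ∈ P, α j := by
          rw [Finset.mul_sum, ← Finset.sum_add_distrib]
          exact Finset.sum_congr rfl (fun j _ => by ring)
        have h3 : ∑ j ∈ P, α j ≤ d := by
          calc ∑ j ∈ P, α j ≤ ∑ _j ∈ P, (1:ℝ) := Finset.sum_le_sum (fun j _ => hα1 j)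
          _ = P.card := by simp
          _ ≤ d := by
              have := Finset.card_le_univ P
              simpa using this
        have := mul_le_mul_of_nonneg_left h3 (le_of_lt hε'pos)
        linarith
      have hεeqB : ε' * (d + 1) = ε := by
        rw [hε'def]; exact div_mul_cancel₀ _ (ne_of_gt hdpos)
      have hεle : ε' * d ≤ ε := by linarith [hεeqB, hε'pos]
      linarith [hA, hsum]
    refine ⟨P, hPne, hPuniv, X, α, ?_, ?_, stageB, hrP⟩
    · intro j hj
      exact ⟨((Finset.mem_filter.mp hj).2).2, hX1 j⟩
    · intro j hj
      obtain ⟨n, hn⟩ := (ea j ((Finset.mem_filter.mp hj).2).1).exists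
      rw [← hn]
      exact haA n j

lemma tphi_ge_inv {q : ℕ} (hq : 1 ≤ q) (m : ℤ) : 1/(q:ℝ) ≤ tphi ((m:ℝ) * (1/q)) := by
  have hq0 : (0:ℝ) < q := by exact_mod_cast hq
  have harg : (m:ℝ) * (1/q) = (m:ℝ)/q := by ring
  rw [harg]
  have h1 : ((⌈(m:ℝ)/q⌉ : ℤ) : ℝ) < (m:ℝ)/q + 1 := Int.ceil_lt_add_one _
  have h2 : (q:ℝ) * (⌈(m:ℝ)/q⌉ : ℝ) < (m:ℝ) + (q:ℝ) := by
    have h3 := mul_lt_mul_of_pos_left h1 hq0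
    calc (q:ℝ) * (⌈(m:ℝ)/q⌉ : ℝ) < (q:ℝ) * ((m:ℝ)/q + 1) := h3
    _ = (m:ℝ) + (q:ℝ) := by field_simp
  have h4 : (q:ℤ) * ⌈(m:ℝ)/q⌉ < m + q := by exact_mod_cast h2
  have h5 : (q:ℤ) * ⌈(m:ℝ)/q⌉ ≤ m + q - 1 := by omega
  have h6 : (q:ℝ) * (⌈(m:ℝ)/q⌉ : ℝ) ≤ (m:ℝ) + (q:ℝ) - 1 := by exact_mod_cast h5
  have h7 : (⌈(m:ℝ)/q⌉ : ℝ) ≤ ((m:ℝ) + q - 1)/q := by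
    rw [le_div_iff₀ hq0]
    linarith [h6]
  have h8 : ((m:ℝ) + q - 1)/q = (m:ℝ)/q + 1 - 1/q := by
    field_simp
  rw [h8] at h7
  unfold tphi
  linarith [h7]

lemma pad_sum {d d' : ℕ} (hle : d' ≤ d) (f : Fin d' → ℝ) (c : ℝ) :
    ∑ i : Fin d, (if h : (i:ℕ) < d' then f ⟨i, h⟩ else c)
      = (∑ j : Fin d', f j) + ((d - d' : ℕ) : ℝ) * c := by
  classical
  set F : ℕ → ℝ := fun n => if h : n < d' then f ⟨n, h⟩ else c with hF
  have h1 : ∑ i : Fin d, (if h : (i:ℕ) < d' then f ⟨i, h⟩ else c) = ∑ n ∈ range d, F n := by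
    rw [← Fin.sum_univ_eq_sum_range F d]
  have h2 : ∑ j : Fin d', f j = ∑ n ∈ range d', F n := by
    rw [← Fin.sum_univ_eq_sum_range F d']
    apply Finset.sum_congr rfl
    intro j _
    rw [hF]
    simp only
    rw [dif_pos j.2]
  have h3 : ∑ n ∈ Ico d' d, F n = ((d - d' : ℕ) : ℝ) * c := by
    have h4 : ∀ n ∈ Ico d' d, F n = c := by
      intro n hn
      rw [Finset.mem_Ico] at hn
      rw [hF]
      simp only
      rw [dif_neg (not_lt.mpr hn.1)]
    rw [Finset.sum_congr rfl h4, Finset.sum_const, Nat.card_Ico, nsmul_eq_mul]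
  have h5 : (∑ n ∈ range d', F n) + (∑ n ∈ Ico d' d, F n) = ∑ n ∈ range d, F n := by
    rw [Finset.range_eq_Ico, Finset.range_eq_Ico]
    exact Finset.sum_Ico_consecutive F (Nat.zero_le d') hle
  rw [h1, h2, ← h5, h3]

lemma pad_witness {d d' : ℕ} (hle : d' ≤ d) (A : Set ℝ) (h1A : (1:ℝ) ∈ A)
    (p : (Fin d' → ℝ) × (Fin d' → ℝ)) (hp : p ∈ Vtilde d' A) (q : ℕ) (hq : 1 ≤ q) :
    ∃ P ∈ Vtilde d A, ∑ i, P.1 i * P.2 i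
      = (∑ i, p.1 i * p.2 i) + ((d - d' : ℕ):ℝ) * (1/(q:ℝ)) := by
  classical
  rw [vtilde_iff] at hp
  obtain ⟨hx, ha, hcon⟩ := hp
  have hq0 : (0:ℝ) < q := by exact_mod_cast hq
  set P : (Fin d → ℝ) × (Fin d → ℝ) :=
    (fun i => if h : (i:ℕ) < d' then p.1 ⟨i, h⟩ else 1/(q:ℝ),
     fun i => if h : (i:ℕ) < d' then p.2 ⟨i, h⟩ else 1) with hPdef
  have hval : ∑ i, P.1 i * P.2 i = (∑ i, p.1 i * p.2 i) + ((d - d' : ℕ):ℝ) * (1/(q:ℝ)) := by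
    have h1 : ∀ i : Fin d, P.1 i * P.2 i
        = if h : (i:ℕ) < d' then p.1 ⟨i, h⟩ * p.2 ⟨i, h⟩ else 1/(q:ℝ) := by
      intro i
      by_cases h : (i:ℕ) < d'
      · rw [hPdef]; simp only [dif_pos h]
      · rw [hPdef]; simp only [dif_neg h]; ring
    rw [Finset.sum_congr rfl (fun i _ => h1 i)]
    exact pad_sum hle (fun j => p.1 j * p.2 j) (1/(q:ℝ))
  refine ⟨P, ?_, hval⟩
  rw [vtilde_iff]
  refine ⟨?_, ?_, ?_⟩
  · intro i
    by_cases h : (i:ℕ) < d'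
    · rw [hPdef]; simp only [dif_pos h]; exact hx ⟨i, h⟩
    · rw [hPdef]; simp only [dif_neg h]
      constructor
      · positivity
      · rw [div_le_one hq0]; exact_mod_cast hq
  · intro i
    by_cases h : (i:ℕ) < d'
    · rw [hPdef]; simp only [dif_pos h]; exact ha ⟨i, h⟩
    · rw [hPdef]; simp only [dif_neg h]; exact h1A
  · intro m
    have h2 : ∀ i : Fin d, tphi ((m:ℝ) * P.1 i) * P.2 i
        = if h : (i:ℕ) < d' then tphi ((m:ℝ) * p.1 ⟨i, h⟩) * p.2 ⟨i, h⟩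
          else tphi ((m:ℝ) * (1/(q:ℝ))) := by
      intro i
      by_cases h : (i:ℕ) < d'
      · rw [hPdef]; simp only [dif_pos h]
      · rw [hPdef]; simp only [dif_neg h]; ring
    rw [hval, Finset.sum_congr rfl (fun i _ => h2 i),
      pad_sum hle (fun j => tphi ((m:ℝ) * p.1 j) * p.2 j) (tphi ((m:ℝ) * (1/(q:ℝ))))]
    have h3 := hcon m
    have h4 : ((d - d' : ℕ):ℝ) * (1/(q:ℝ)) ≤ ((d - d' : ℕ):ℝ) * tphi ((m:ℝ) * (1/(q:ℝ))) :=
      mul_le_mul_of_nonneg_left (tphi_ge_inv hq m) (by positivity)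
    linarith

lemma zero_witness (A : Set ℝ) :
    ((fun i => i.elim0, fun i => i.elim0) : (Fin 0 → ℝ) × (Fin 0 → ℝ)) ∈ Vtilde 0 A := by
  refine ⟨fun i => i.elim0, fun i => i.elim0, fun m => by simp⟩

lemma easy_dir {d : ℕ} (hd : 1 ≤ d) (A : Set ℝ) (h1A : (1:ℝ) ∈ A) {d' : ℕ}
    (hd'le : d' ≤ d - 1) (p : (Fin d' → ℝ) × (Fin d' → ℝ)) (hp : p ∈ Vtilde d' A) :
    (∑ i, p.1 i * p.2 i) ∈ accPts {r : ℝ | ∃ P ∈ Vtilde d A, r = ∑ i, P.1 i * P.2 i} := by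
  intro U hU
  rw [Metric.mem_nhds_iff] at hU
  obtain ⟨ε, hε, hball⟩ := hU
  set c := d - d' with hcdef
  have hc1 : 1 ≤ c := by omega
  have hcr : (1:ℝ) ≤ (c:ℝ) := by exact_mod_cast hc1
  obtain ⟨q, hq⟩ := exists_nat_gt ((c:ℝ)/ε)
  have hq0 : (0:ℝ) < (q:ℝ) := lt_trans (by positivity) hq
  have hq1 : 1 ≤ q := by
    have : 0 < q := by exact_mod_cast hq0
    omega
  have hlt : (c:ℝ)/(q:ℝ) < ε := by
    rw [div_lt_iff₀ hε] at hq
    rw [div_lt_iff₀ hq0]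
    nlinarith
  obtain ⟨P, hP, hval⟩ := pad_witness (show d' ≤ d by omega) A h1A p hp q hq1
  have hpos : 0 < ((c:ℕ):ℝ) * (1/(q:ℝ)) := by
    apply mul_pos (by linarith) (by positivity)
  refine ⟨∑ i, P.1 i * P.2 i, ⟨P, hP, rfl⟩, ?_, ?_⟩
  · rw [hval]
    intro heq
    rw [← hcdef] at heq
    nlinarith [hpos]
  · apply hball
    rw [Metric.mem_ball, Real.dist_eq, hval, ← hcdef]
    rw [show ∑ i, p.1 i * p.2 i + ((c:ℕ):ℝ) * (1/(q:ℝ)) - ∑ i, p.1 i * p.2 i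
      = ((c:ℕ):ℝ) * (1/(q:ℝ)) by ring]
    rw [abs_of_pos hpos]
    calc ((c:ℕ):ℝ) * (1/(q:ℝ)) = (c:ℝ)/(q:ℝ) := by ring
    _ < ε := hlt

open Finset in
/-- if `A` has no positive accumulation points, then the set of
accumulation points of `{⟨x,a⟩ : (x,a) ∈ Ṽ_d(A)}` equals
`{0} ∪ ⋃_{1 ≤ d' ≤ d-1} {⟨x,a⟩ : (x,a) ∈ Ṽ_{d'}(A)}`. -/
theorem toric_mld_stmt13 (A : Set ℝ) (hA : A ⊆ Set.Icc 0 1) (h1 : (1:ℝ) ∈ A)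
    (hacc : ∀ r : ℝ, 0 < r → r ∉ accPts A) (d : ℕ) (hd : 1 ≤ d) :
    accPts {r : ℝ | ∃ p ∈ Vtilde d A, r = ∑ i, p.1 i * p.2 i} =
    {0} ∪ {r : ℝ | ∃ d', 1 ≤ d' ∧ d' ≤ d - 1 ∧
      ∃ p ∈ Vtilde d' A, r = ∑ i, p.1 i * p.2 i} := by
  ext r
  simp only [Set.mem_union, Set.mem_singleton_iff, Set.mem_setOf_eq]
  constructor
  · intro hracc
    by_cases hr0 : r = 0
    · exact Or.inl hr0
    refine Or.inr ?_
    have hseq : ∀ n : ℕ, ∃ s : ℝ, (∃ p ∈ Vtilde d A, s = ∑ i, p.1 i * p.2 i)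
        ∧ s ≠ r ∧ |s - r| < 1/((n:ℝ)+1) := by
      intro n
      obtain ⟨s, hs1, hs2, hs3⟩ := hracc (Metric.ball r (1/((n:ℝ)+1)))
        (Metric.ball_mem_nhds r (by positivity))
      exact ⟨s, hs1, hs2, by simpa [Real.dist_eq] using hs3⟩
    choose s hsS hsne hsclose using hseq
    choose p hpV hpval using hsS
    have hxm : ∀ n i, (p n).1 i ∈ Set.Ioc (0:ℝ) 1 := fun n => (hpV n).1
    have ham : ∀ n i, (p n).2 i ∈ A := fun n => (hpV n).2.1
    have hamI : ∀ n i, (p n).2 i ∈ Set.Icc (0:ℝ) 1 := fun n i => hA (ham n i)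
    have hconm : ∀ n (m : ℤ), ∑ i, (p n).1 i * (p n).2 i
        ≤ ∑ i, tphi ((m:ℝ) * (p n).1 i) * (p n).2 i :=
      fun n => ((vtilde_iff d A (p n)).mp (hpV n)).2.2
    have hstend : Tendsto s atTop (nhds r) := by
      rw [tendsto_iff_dist_tendsto_zero]
      apply squeeze_zero (fun n => dist_nonneg)
        (g := fun n : ℕ => 1/((n:ℝ)+1))
        (fun n => by rw [Real.dist_eq]; exact (hsclose n).le)
      exact tendsto_one_div_add_atTop_nhds_zero_nat
    have hsnonneg : ∀ n, 0 ≤ s n := by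
      intro n
      rw [hpval n]
      apply Finset.sum_nonneg
      intro i _
      exact mul_nonneg (hxm n i).1.le (hamI n i).1
    have hrpos : 0 < r :=
      lt_of_le_of_ne (ge_of_tendsto' hstend hsnonneg) (Ne.symm hr0)
    set K := (Set.pi Set.univ fun _ : Fin d => Set.Icc (0:ℝ) 1) ×ˢ
      (Set.pi Set.univ fun _ : Fin d => Set.Icc (0:ℝ) 1) with hKdef
    have hKc : IsCompact K :=
      (isCompact_univ_pi fun _ => isCompact_Icc).prod
        (isCompact_univ_pi fun _ => isCompact_Icc)
    have hmem : ∀ n, p n ∈ K := by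
      intro n
      constructor
      · exact fun i _ => ⟨(hxm n i).1.le, (hxm n i).2⟩
      · exact fun i _ => hamI n i
    obtain ⟨L, _, φ, hφ, hφt⟩ := hKc.tendsto_subseq hmem
    have hφat : Tendsto φ atTop atTop := hφ.tendsto_atTop
    have htx0 : Tendsto (fun k => (p (φ k)).1) atTop (nhds L.1) :=
      (continuous_fst.tendsto L).comp hφt
    have hta0 : Tendsto (fun k => (p (φ k)).2) atTop (nhds L.2) :=
      (continuous_snd.tendsto L).comp hφt
    have tx : ∀ i, Tendsto (fun k => (p (φ k)).1 i) atTop (nhds (L.1 i)) :=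
      fun i => (tendsto_pi_nhds.mp htx0) i
    have ta : ∀ i, Tendsto (fun k => (p (φ k)).2 i) atTop (nhds (L.2 i)) :=
      fun i => (tendsto_pi_nhds.mp hta0) i
    have ea : ∀ i, 0 < L.2 i → ∀ᶠ k in atTop, (p (φ k)).2 i = L.2 i := by
      intro i hpos
      by_contra hc
      have hfreq : ∃ᶠ k in atTop, (p (φ k)).2 i ≠ L.2 i := not_eventually.mp hc
      apply hacc (L.2 i) hpos
      intro U hU
      have hev : ∀ᶠ k in atTop, (p (φ k)).2 i ∈ U := (ta i) hU
      obtain ⟨k, hkU, hkne⟩ := (hev.and_frequently hfreq).exists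
      exact ⟨(p (φ k)).2 i, ham (φ k) i, hkne, hkU⟩
    have hsr' : Tendsto (fun k => ∑ i, (p (φ k)).1 i * (p (φ k)).2 i) atTop (nhds r) := by
      have heq : (fun k => ∑ i, (p (φ k)).1 i * (p (φ k)).2 i) = s ∘ φ :=
        funext fun k => (hpval (φ k)).symm
      rw [heq]
      exact hstend.comp hφat
    have hsne' : ∀ k, ∑ i, (p (φ k)).1 i * (p (φ k)).2 i ≠ r := by
      intro k
      rw [← hpval (φ k)]
      exact hsne (φ k)
    obtain ⟨J, hJne, hJuniv, ξ, β, hξIoc, hβA, hconJ, hvalJ⟩ :=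
      hard_case hd A (fun k => (p (φ k)).1) (fun k => (p (φ k)).2) L.1 L.2 r
        (fun n i => hxm (φ n) i) (fun n i => ham (φ n) i) (fun n i => hamI (φ n) i)
        (fun n => hconm (φ n)) tx ta ea hsr' hsne' hrpos
    obtain ⟨PP, hPP, hPPval⟩ := witness_of_finset A J ξ β hξIoc hβA hconJ
    refine ⟨J.card, Finset.card_pos.mpr hJne, ?_, PP, hPP, ?_⟩
    · have hlt : J.card < d := by
        have h1 : J ⊂ univ := Finset.ssubset_univ_iff.mpr hJuniv
        have h2 := Finset.card_lt_card h1
        simpa using h2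
      omega
    · rw [hPPval, hvalJ]
  · rintro (rfl | ⟨d', _, hd'le, p, hpV, rfl⟩)
    · have h := easy_dir hd A h1 (d' := 0) (by omega)
        ((fun i => i.elim0, fun i => i.elim0) : (Fin 0 → ℝ) × (Fin 0 → ℝ))
        (zero_witness A)
      simpa using h
    · exact easy_dir hd A h1 hd'le p hpV
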